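/- Let G = (V,E) be a finite simple graph and p ≥ 1. For sets T ⊆ R ⊆ V and a node j ∈ T, Δ_j(T) ≤ Δ_j(R), where Δ_j(S) = d_j(S)^p + Σ_{i ∈ N(j)∩S, i≠j} (d_i(S)^p − (d_i(S)−1)^p). -/
import Mathlib

/-- Induced degree: `d_v(S)` is the number of neighbors of `v` lying in `S`
if `v ∈ S`, and `0` otherwise. -/
noncomputable def indDeg {V : Type*} [DecidableEq V] (G : SimpleGraph V)
    (S : Finset V) (v : V) : ℕ :=
  if v ∈ S then Nat.card {u : V // u ∈ S ∧ G.Adj v u} else 0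

/-- `Δ_j(S) = d_j(S)^p + Σ_{i ∈ N(j)∩S} (d_i(S)^p − (d_i(S)−1)^p)`
(note `j ∉ N(j)` since the graph is simple). -/
noncomputable def DeltaP {V : Type*} [DecidableEq V] (G : SimpleGraph V)
    [DecidableRel G.Adj] (p : ℝ) (S : Finset V) (j : V) : ℝ :=
  (indDeg G S j : ℝ) ^ p +
    ∑ i ∈ S.filter (fun i => G.Adj j i ∧ i ≠ j),
      ((indDeg G S i : ℝ) ^ p - ((indDeg G S i : ℝ) - 1) ^ p)

/-- The function `x ↦ x^p - (x-1)^p` is nondecreasing on `[1, ∞)` for `p ≥ 1`. -/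
lemma rpow_sub_rpow_mono {p : ℝ} (hp : 1 ≤ p) {a b : ℝ} (ha : 1 ≤ a) (hab : a ≤ b) :
    a ^ p - (a - 1) ^ p ≤ b ^ p - (b - 1) ^ p := by
  rcases eq_or_lt_of_le hab with rfl | h
  · exact le_rfl
  · have hcv := convexOn_rpow hp
    have hd : (0:ℝ) < b - a + 1 := by linarith
    set l : ℝ := (b - a) / (b - a + 1) with hl
    have hl0 : 0 ≤ l := div_nonneg (by linarith) (by linarith)
    have hl1 : l ≤ 1 := by rw [hl, div_le_one hd]; linarith
    have hmem1 : (a - 1 : ℝ) ∈ Set.Ici (0:ℝ) := by simp; linarith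
    have hmem2 : (b : ℝ) ∈ Set.Ici (0:ℝ) := by simp; linarith
    have e1 : l * (a - 1) + (1 - l) * b = a := by
      rw [hl]; field_simp; ring
    have e2 : (1 - l) * (a - 1) + l * b = b - 1 := by
      rw [hl]; field_simp; ring
    have h1 := hcv.2 hmem1 hmem2 hl0 (show (0:ℝ) ≤ 1 - l by linarith) (show l + (1 - l) = 1 by ring)
    have h2 := hcv.2 hmem1 hmem2 (show (0:ℝ) ≤ 1 - l by linarith) hl0 (show (1 - l) + l = 1 by ring)
    simp only [smul_eq_mul] at h1 h2
    rw [e1] at h1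
    rw [e2] at h2
    linarith

lemma indDeg_eq_card {V : Type*} [Fintype V] [DecidableEq V] (G : SimpleGraph V)
    [DecidableRel G.Adj] (S : Finset V) (v : V) (hv : v ∈ S) :
    indDeg G S v = (S.filter (G.Adj v)).card := by
  classical
  rw [indDeg, if_pos hv, Nat.card_eq_fintype_card, Fintype.card_subtype]
  congr 1
  ext u
  simp [and_comm]

lemma indDeg_mono {V : Type*} [Fintype V] [DecidableEq V] (G : SimpleGraph V)
    [DecidableRel G.Adj] {T R : Finset V} (hTR : T ⊆ R) (v : V) (hv : v ∈ T) :
    indDeg G T v ≤ indDeg G R v := by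
  rw [indDeg_eq_card G T v hv, indDeg_eq_card G R v (hTR hv)]
  exact Finset.card_le_card (Finset.filter_subset_filter _ hTR)

lemma one_le_indDeg {V : Type*} [Fintype V] [DecidableEq V] (G : SimpleGraph V)
    [DecidableRel G.Adj] {S : Finset V} {i j : V} (hi : i ∈ S) (hj : j ∈ S)
    (hadj : G.Adj j i) : 1 ≤ indDeg G S i := by
  rw [indDeg_eq_card G S i hi]
  refine Finset.card_pos.mpr ⟨j, ?_⟩
  simp [hj, hadj.symm]

theorem DeltaP_mono {V : Type*} [Fintype V] [DecidableEq V]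
    (G : SimpleGraph V) [DecidableRel G.Adj] (p : ℝ) (hp : 1 ≤ p)
    (T R : Finset V) (hTR : T ⊆ R) (j : V) (hj : j ∈ T) :
    DeltaP G p T j ≤ DeltaP G p R j := by
  unfold DeltaP
  have hp0 : 0 ≤ p := by linarith
  have hjR : j ∈ R := hTR hj
  gcongr ?_ + ?_
  · exact Real.rpow_le_rpow (by positivity)
      (by exact_mod_cast indDeg_mono G hTR j hj) hp0
  · -- sums
    have hsub : T.filter (fun i => G.Adj j i ∧ i ≠ j) ⊆
        R.filter (fun i => G.Adj j i ∧ i ≠ j) :=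
      Finset.filter_subset_filter _ hTR
    refine le_trans (Finset.sum_le_sum ?_) (Finset.sum_le_sum_of_subset_of_nonneg hsub ?_)
    · intro i hi
      simp only [Finset.mem_filter] at hi
      have hiT := hi.1
      have h1 : 1 ≤ indDeg G T i := one_le_indDeg G hiT hj hi.2.1
      exact rpow_sub_rpow_mono hp (by exact_mod_cast h1)
        (by exact_mod_cast indDeg_mono G hTR i hiT)
    · intro i hiR _
      simp only [Finset.mem_filter] at hiR
      have h1 : 1 ≤ indDeg G R i := one_le_indDeg G hiR.1 hjR hiR.2.1
      have h1' : (1:ℝ) ≤ (indDeg G R i : ℝ) := by exact_mod_cast h1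
      have := rpow_sub_rpow_mono hp le_rfl h1'
      simp only [sub_self, Real.one_rpow] at this
      rw [Real.zero_rpow (by linarith : p ≠ 0)] at this
      linarith
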